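/- Let B be a linear map on ℝⁿ commuting with the antisymmetric matrix A and satisfying B v = 0. If C : ℝ → ℝⁿ is an arclength-parametrized solution of the soliton equation C'' = (α + A)C + v + λ(s) C', then δ(s) = ½‖B C(s)‖² satisfies the ODE δ'' - λ(s) δ' - 2α δ = ‖B C'(s)‖². -/

import Mathlib

open Matrix
open scoped RealInnerProductSpace

theorem stmt5 (n : ℕ) (α : ℝ) (A : Matrix (Fin n) (Fin n) ℝ) (hA : Aᵀ = -A)
    (v : EuclideanSpace ℝ (Fin n))
    (B : EuclideanSpace ℝ (Fin n) →ₗ[ℝ] EuclideanSpace ℝ (Fin n))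
    (hBA : B ∘ₗ A.toEuclideanLin = A.toEuclideanLin ∘ₗ B)
    (hBv : B v = 0)
    (C : ℝ → EuclideanSpace ℝ (Fin n)) (lam : ℝ → ℝ)
    (hC : ContDiff ℝ 2 C)
    (harc : ∀ s, ‖deriv C s‖ = 1)
    (hlam : ∀ s, lam s = -⟪α • C s + A.toEuclideanLin (C s) + v, deriv C s⟫)
    (heq : ∀ s, deriv (deriv C) s
      = α • C s + A.toEuclideanLin (C s) + v + lam s • deriv C s) :
    ∀ s, deriv (deriv (fun s' => (1 / 2) * ‖B (C s')‖ ^ 2)) s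
        - lam s * deriv (fun s' => (1 / 2) * ‖B (C s')‖ ^ 2) s
        - 2 * α * ((1 / 2) * ‖B (C s)‖ ^ 2)
      = ‖B (deriv C s)‖ ^ 2 := by
  intro s
  have hCd : Differentiable ℝ C := hC.differentiable (by norm_num)
  have hCd2 : Differentiable ℝ (deriv C) := by
    have h2 : ContDiff ℝ ((1 : WithTop ℕ∞) + 1) C := by
      have e : ((1 : WithTop ℕ∞) + 1) = 2 := by norm_num
      rw [e]; exact hC
    exact ((contDiff_succ_iff_deriv).mp h2).2.2.differentiable (by norm_num)
  set Bc := LinearMap.toContinuousLinearMap B with hBcdef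
  have hf : ∀ t, HasDerivAt (fun u => B (C u)) (B (deriv C t)) t := fun t =>
    Bc.hasFDerivAt.comp_hasDerivAt t (hCd t).hasDerivAt
  have hf' : ∀ t, HasDerivAt (fun u => B (deriv C u)) (B (deriv (deriv C) t)) t := fun t =>
    Bc.hasFDerivAt.comp_hasDerivAt t (hCd2 t).hasDerivAt
  have hδ : ∀ t, HasDerivAt (fun u => (1 / 2 : ℝ) * ‖B (C u)‖ ^ 2)
      ⟪B (C t), B (deriv C t)⟫ t := by
    intro t
    have h := ((hf t).inner ℝ (hf t)).const_mul (1 / 2 : ℝ)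
    have e1 : (fun u => (1 / 2 : ℝ) * ⟪B (C u), B (C u)⟫)
        = (fun u => (1 / 2 : ℝ) * ‖B (C u)‖ ^ 2) := by
      funext u; rw [real_inner_self_eq_norm_sq]
    rw [e1] at h
    refine h.congr_deriv ?_
    rw [real_inner_comm (B (deriv C t)) (B (C t))]
    ring
  have hd1 : deriv (fun s' => (1 / 2 : ℝ) * ‖B (C s')‖ ^ 2)
      = fun t => ⟪B (C t), B (deriv C t)⟫ := funext fun t => (hδ t).deriv
  have hδ2 : HasDerivAt (fun t => ⟪B (C t), B (deriv C t)⟫)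
      (⟪B (C s), B (deriv (deriv C) s)⟫ + ⟪B (deriv C s), B (deriv C s)⟫) s :=
    (hf s).inner ℝ (hf' s)
  have hAB : ∀ x, B (A.toEuclideanLin x) = A.toEuclideanLin (B x) := fun x =>
    LinearMap.congr_fun hBA x
  have hskew : ∀ x : EuclideanSpace ℝ (Fin n), ⟪x, A.toEuclideanLin x⟫ = 0 := by
    intro x
    have h1 : ⟪x, A.toEuclideanLin x⟫ = x ⬝ᵥ (A *ᵥ x) := by
      simp [PiLp.inner_apply, Matrix.toEuclideanLin_apply, dotProduct]
      exact Finset.sum_congr rfl fun i _ => mul_comm _ _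
    have h2 : x ⬝ᵥ (A *ᵥ x) = (Aᵀ *ᵥ x) ⬝ᵥ x := by
      rw [Matrix.dotProduct_mulVec, Matrix.mulVec_transpose]
    rw [hA] at h2
    have h3 : ((-A) *ᵥ x) ⬝ᵥ x = -(x ⬝ᵥ (A *ᵥ x)) := by
      rw [Matrix.neg_mulVec, neg_dotProduct, dotProduct_comm]
    rw [h1]
    have := h2.trans h3
    linarith
  -- compute the inner product with the second derivative
  have hkey : ⟪B (C s), B (deriv (deriv C) s)⟫
      = α * ⟪B (C s), B (C s)⟫ + lam s * ⟪B (C s), B (deriv C s)⟫ := by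
    rw [heq s]
    simp only [map_add, LinearMap.map_smul, hBv, hAB, add_zero]
    rw [inner_add_right, inner_add_right, real_inner_smul_right, real_inner_smul_right,
      hskew (B (C s))]
    ring
  have hd2 : deriv (deriv (fun s' => (1 / 2 : ℝ) * ‖B (C s')‖ ^ 2)) s
      = ⟪B (C s), B (deriv (deriv C) s)⟫ + ⟪B (deriv C s), B (deriv C s)⟫ := by
    rw [hd1]; exact hδ2.deriv
  rw [hd2, hd1, hkey, real_inner_self_eq_norm_sq, real_inner_self_eq_norm_sq]
  ring
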